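/- Let X, Y, Z be real normed linear spaces, A ⊆ X a convex set, and B ⊆ Y an open set. Let F : A → B and G : B → Z be locally d.c. mappings. Then G ∘ F is locally d.c. on A. -/

import Mathlib

open Set Metric Bornology Filter NNReal

/-- `f` is a control function for `F` on the convex set `C`. -/
def IsControlOn {X Y : Type*} [NormedAddCommGroup X] [NormedSpace ℝ X]
    [NormedAddCommGroup Y] [NormedSpace ℝ Y]
    (C : Set X) (F : X → Y) (f : X → ℝ) : Prop :=
  ContinuousOn f C ∧
    ∀ φ : Y →L[ℝ] ℝ, ‖φ‖ ≤ 1 → ConvexOn ℝ C (fun x => φ (F x) + f x)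

/-- `F` is a d.c. (delta-convex) mapping on `C`. -/
def IsDCOn {X Y : Type*} [NormedAddCommGroup X] [NormedSpace ℝ X]
    [NormedAddCommGroup Y] [NormedSpace ℝ Y]
    (C : Set X) (F : X → Y) : Prop :=
  ContinuousOn F C ∧ ∃ f : X → ℝ, IsControlOn C F f

/-- `g` is a d.c. function on `C`: a difference of two continuous convex functions. -/
def IsDCFnOn {X : Type*} [NormedAddCommGroup X] [NormedSpace ℝ X]
    (C : Set X) (g : X → ℝ) : Prop :=
  ∃ p q : X → ℝ, ContinuousOn p C ∧ ContinuousOn q C ∧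
    ConvexOn ℝ C p ∧ ConvexOn ℝ C q ∧ ∀ x ∈ C, g x = p x - q x

/-- `A ⊂⊂ B`: some ε-enlargement of `A` is contained in `B`. -/
def SubSub {X : Type*} [NormedAddCommGroup X] (A B : Set X) : Prop :=
  ∃ ε > (0:ℝ), ∀ a ∈ A, ∀ y : X, ‖y‖ < ε → a + y ∈ B

/-- `N` is an equivalent norm on `Y` with modulus of convexity of power type 2. -/
def IsEquivNormPT2 {Y : Type*} [NormedAddCommGroup Y] [NormedSpace ℝ Y] (N : Y → ℝ) : Prop :=
  (∀ u v : Y, N (u + v) ≤ N u + N v) ∧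
  (∀ (a : ℝ) (u : Y), N (a • u) = |a| * N u) ∧
  (∃ c₁ c₂ : ℝ, 0 < c₁ ∧ 0 < c₂ ∧ ∀ u : Y, c₁ * ‖u‖ ≤ N u ∧ N u ≤ c₂ * ‖u‖) ∧
  (∃ a : ℝ, 0 < a ∧ ∀ ε : ℝ, ε ∈ Set.Ioc (0:ℝ) 2 → ∀ u v : Y,
    N u ≤ 1 → N v ≤ 1 → ε ≤ N (u - v) → a * ε ^ 2 ≤ 1 - N ((2⁻¹ : ℝ) • (u + v)))

/-- `G` is `C^{1,1}` on `U`: Fréchet differentiable with Lipschitz derivative. -/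
def IsC11On {X Y : Type*} [NormedAddCommGroup X] [NormedSpace ℝ X]
    [NormedAddCommGroup Y] [NormedSpace ℝ Y] (U : Set X) (G : X → Y) : Prop :=
  ∃ G' : X → X →L[ℝ] Y, (∀ x ∈ U, HasFDerivAt G (G' x) x) ∧
    ∃ L : NNReal, LipschitzOnWith L G' U

/-- `F` is locally d.c. on `C`: each point of `C` has a convex neighborhood `U`
with `F` d.c. on `U ∩ C`. -/
def LocallyDCOn {X Y : Type*} [NormedAddCommGroup X] [NormedSpace ℝ X]
    [NormedAddCommGroup Y] [NormedSpace ℝ Y] (C : Set X) (F : X → Y) : Prop :=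
  ∀ a ∈ C, ∃ U : Set X, U ∈ nhds a ∧ Convex ℝ U ∧ IsDCOn (U ∩ C) F

/-- the composition of locally d.c. mappings (the outer one defined on
an open set) is locally d.c. -/
theorem locallyDC_comp {X Y Z : Type*}
    [NormedAddCommGroup X] [NormedSpace ℝ X]
    [NormedAddCommGroup Y] [NormedSpace ℝ Y]
    [NormedAddCommGroup Z] [NormedSpace ℝ Z]
    (A : Set X) (hAconv : Convex ℝ A) (B : Set Y) (hBopen : IsOpen B)
    (F : X → Y) (hFmaps : Set.MapsTo F A B) (hF : LocallyDCOn A F)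
    (G : Y → Z) (hG : ∀ b ∈ B, ∃ U : Set Y, U ∈ nhds b ∧ Convex ℝ U ∧ IsDCOn (U ∩ B) G) :
    LocallyDCOn A (G ∘ F) := by
  intro a ha
  obtain ⟨U, hU, hUconv, hFcont, f, hfcont, hfctrl⟩ := hF a ha
  have hb : F a ∈ B := hFmaps ha
  obtain ⟨V, hV, hVconv, hGcont, g, hgcont, hgctrl⟩ := hG (F a) hb
  have hVB : V ∩ B ∈ nhds (F a) := Filter.inter_mem hV (hBopen.mem_nhds hb)
  have haVB : F a ∈ V ∩ B := ⟨mem_of_mem_nhds hV, hb⟩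
  -- continuity of G and g at F a
  have hGA : ContinuousAt G (F a) := (hGcont (F a) haVB).continuousAt hVB
  have hgA : ContinuousAt g (F a) := (hgcont (F a) haVB).continuousAt hVB
  have hE : (G ⁻¹' ball (G (F a)) 1) ∩ (g ⁻¹' ball (g (F a)) 1) ∩ (V ∩ B) ∈ nhds (F a) :=
    Filter.inter_mem (Filter.inter_mem (hGA (ball_mem_nhds _ one_pos))
      (hgA (ball_mem_nhds _ one_pos))) hVB
  obtain ⟨r, hr, hrE⟩ := Metric.mem_nhds_iff.1 hE
  set M : ℝ := ‖G (F a)‖ + |g (F a)| + 2 with hM_def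
  set L : ℝ := 2 * M / (r / 2) with hL_def
  have hM0 : 0 < M := by positivity
  have hL0 : 0 ≤ L := by positivity
  set D : Set Y := ball (F a) (r / 2) with hD_def
  have hDVB : D ⊆ V ∩ B := fun y hy => (hrE (ball_subset_ball (by linarith) hy)).2
  -- bound on h_{z*} on ball (F a) r
  have hbound : ∀ (φ : Z →L[ℝ] ℝ), ‖φ‖ ≤ 1 → ∀ y, dist y (F a) < r →
      |φ (G y) + g y| ≤ M := by
    intro φ hφ y hy
    have hyE := hrE (mem_ball.2 hy)
    have h1 : ‖G y - G (F a)‖ < 1 := by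
      have := hyE.1.1; rwa [Set.mem_preimage, mem_ball, dist_eq_norm] at this
    have h2 : |g y - g (F a)| < 1 := by
      have := hyE.1.2; rwa [Set.mem_preimage, mem_ball, Real.dist_eq] at this
    have hGy : ‖G y‖ ≤ ‖G (F a)‖ + 1 := by
      calc ‖G y‖ = ‖G (F a) + (G y - G (F a))‖ := by rw [add_sub_cancel]
        _ ≤ ‖G (F a)‖ + ‖G y - G (F a)‖ := norm_add_le _ _
        _ ≤ ‖G (F a)‖ + 1 := by linarith
    have hgy : |g y| ≤ |g (F a)| + 1 := by
      calc |g y| = |g (F a) + (g y - g (F a))| := by rw [add_sub_cancel]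
        _ ≤ |g (F a)| + |g y - g (F a)| := abs_add_le _ _
        _ ≤ |g (F a)| + 1 := by linarith
    have hφy : |φ (G y)| ≤ ‖G y‖ := by
      calc |φ (G y)| ≤ ‖φ‖ * ‖G y‖ := φ.le_opNorm _
        _ ≤ 1 * ‖G y‖ := by
            exact mul_le_mul_of_nonneg_right hφ (norm_nonneg _)
        _ = ‖G y‖ := one_mul _
    calc |φ (G y) + g y| ≤ |φ (G y)| + |g y| := abs_add_le _ _
      _ ≤ M := by rw [hM_def]; linarith
  -- Lipschitz property of h_{z*} on D, with uniform constant L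
  have hlip : ∀ (φ : Z →L[ℝ] ℝ), ‖φ‖ ≤ 1 → ∀ u ∈ D, ∀ v ∈ D,
      (φ (G u) + g u) - (φ (G v) + g v) ≤ L * ‖u - v‖ := by
    intro φ hφ u hu v hv
    have hconv : ConvexOn ℝ (ball (F a) r) (fun y => φ (G y) + g y) :=
      (hgctrl φ hφ).subset (fun y hy => (hrE hy).2) (convex_ball _ _)
    have hl := hconv.lipschitzOnWith_of_abs_le (half_pos hr) (hbound φ hφ)
    rw [show r - r / 2 = r / 2 by ring] at hl
    have := hl.dist_le_mul u hu v hv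
    have hcoe : ((L.toNNReal : ℝ≥0) : ℝ) = L := Real.coe_toNNReal L hL0
    rw [Real.dist_eq, dist_eq_norm] at this
    calc (φ (G u) + g u) - (φ (G v) + g v)
        ≤ |(φ (G u) + g u) - (φ (G v) + g v)| := le_abs_self _
      _ ≤ L * ‖u - v‖ := by rw [← hcoe]; exact this
  -- choose the neighborhood W = ball a δ
  have haU : a ∈ U ∩ A := ⟨mem_of_mem_nhds hU, ha⟩
  have hFD : F ⁻¹' D ∈ nhdsWithin a (U ∩ A) :=
    (hFcont a haU) (Metric.ball_mem_nhds _ (half_pos hr))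
  obtain ⟨t, ht_open, hat, htsub⟩ := mem_nhdsWithin.1 hFD
  have ha_int : a ∈ t ∩ interior U := ⟨hat, mem_interior_iff_mem_nhds.2 hU⟩
  obtain ⟨δ, hδ, hδsub⟩ := Metric.isOpen_iff.1 (ht_open.inter isOpen_interior) a ha_int
  have hWU : ball a δ ∩ A ⊆ U ∩ A := fun x hx =>
    ⟨interior_subset (hδsub hx.1).2, hx.2⟩
  have hWD : ∀ x ∈ ball a δ ∩ A, F x ∈ D := fun x hx =>
    htsub ⟨(hδsub hx.1).1, hWU hx⟩
  have hWVB : Set.MapsTo F (ball a δ ∩ A) (V ∩ B) := fun x hx => hDVB (hWD x hx)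
  have hWconv : Convex ℝ (ball a δ ∩ A) := (convex_ball a δ).inter hAconv
  -- convexity of f
  have hf0 : ConvexOn ℝ (U ∩ A) f := by
    have := hfctrl 0 (by simp)
    simpa using this
  refine ⟨ball a δ, ball_mem_nhds a hδ, convex_ball a δ, ?_, ?_⟩
  · exact hGcont.comp (hFcont.mono hWU) hWVB
  · refine ⟨fun x => g (F x) + 2 * L * f x,
      ((hgcont.comp (hFcont.mono hWU) hWVB).add
        (continuousOn_const.mul (hfcont.mono hWU))), ?_⟩
    intro φ hφ
    refine ⟨hWconv, ?_⟩
    intro x hx y hy p q hp hq hpq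
    set z := p • x + q • y with hz_def
    have hzW : z ∈ ball a δ ∩ A := hWconv hx hy hp hq hpq
    have hxU := hWU hx; have hyU := hWU hy; have hzU := hWU hzW
    set u := F x; set v := F y; set w := F z
    have hu : u ∈ D := hWD x hx
    have hv : v ∈ D := hWD y hy
    have hw : w ∈ D := hWD z hzW
    set P : Y := p • u + q • v with hP_def
    have hP : P ∈ D := (convex_ball _ _) hu hv hp hq hpq
    -- f is convex
    have hfz : f z ≤ p * f x + q * f y := by
      have := hf0.2 hxU hyU hp hq hpq
      simpa [smul_eq_mul] using this
    -- norm inequality from Hahn-Banach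
    have hnorm : ‖w - P‖ ≤ p * f x + q * f y - f z := by
      by_cases hwP : w - P = 0
      · rw [hwP, norm_zero]; linarith
      · obtain ⟨ψ, hψ1, hψ2⟩ := exists_dual_vector ℝ (w - P) (norm_ne_zero_iff.mpr hwP)
        have hctrl := (hfctrl ψ hψ1.le).2 hxU hyU hp hq hpq
        simp only [smul_eq_mul] at hctrl
        have hψ2' : ψ (w - P) = ‖w - P‖ := by exact_mod_cast hψ2
        have hψw : ψ w - (p * ψ u + q * ψ v) = ‖w - P‖ := by
          rw [← hψ2', hP_def, map_sub, map_add, map_smul, map_smul]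
          simp [smul_eq_mul]
        linarith
    -- convexity of h
    have hA2 : (φ (G P) + g P) ≤ p * (φ (G u) + g u) + q * (φ (G v) + g v) := by
      have := (hgctrl φ hφ).2 (hDVB hu) (hDVB hv) hp hq hpq
      simpa [smul_eq_mul] using this
    -- Lipschitz step
    have hA1 : (φ (G w) + g w) - (φ (G P) + g P) ≤ L * ‖w - P‖ :=
      hlip φ hφ w hw P hP
    have hB1 : L * ‖w - P‖ ≤ L * (p * f x + q * f y - f z) :=
      mul_le_mul_of_nonneg_left hnorm hL0
    have hB2 : L * f z ≤ L * (p * f x + q * f y) :=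
      mul_le_mul_of_nonneg_left hfz hL0
    simp only [Function.comp_apply, smul_eq_mul]
    nlinarith [hA1, hA2, hB1, hB2]
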